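/- In the cylindrical braid group Br_extg: (a) the elements y_1, …, y_n pairwise commute: y_i y_j = y_j y_i for all 1 ≤ i, j ≤ n; (b) y_1 y_2 ⋯ y_n = ω^n; (c) the group homomorphism ℤ^n → Br_extg sending λ ↦ w_λ (well defined by (a)) is injective, so the subgroup of Br_extg generated by {y_1, …, y_n} is free abelian of rank n. -/

import Mathlib

/-- Generators of the cylindrical braid group: `f i` for `i ∈ ℤ/nℤ`, and `ω`. -/
inductive ExtGen (n : ℕ) : Type
  | f : ZMod n → ExtGen n
  | om : ExtGen n

open FreeGroup in
/-- The defining relations of the cylindrical braid group `Br_extg`: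
`f_i f_{i+1} f_i = f_{i+1} f_i f_{i+1}` (imposed only when `n ≥ 3`),
`f_i f_j = f_j f_i` for `j ∉ {i−1, i, i+1}`, and `ω f_i ω⁻¹ = f_{i+1}`. -/
def extRels (n : ℕ) : Set (FreeGroup (ExtGen n)) :=
  {r | (∃ i : ZMod n, 3 ≤ n ∧
          r = of (ExtGen.f i) * of (ExtGen.f (i + 1)) * of (ExtGen.f i) *
              (of (ExtGen.f (i + 1)) * of (ExtGen.f i) * of (ExtGen.f (i + 1)))⁻¹) ∨
       (∃ i j : ZMod n, j ≠ i - 1 ∧ j ≠ i ∧ j ≠ i + 1 ∧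
          r = of (ExtGen.f i) * of (ExtGen.f j) * (of (ExtGen.f j) * of (ExtGen.f i))⁻¹) ∨
       (∃ i : ZMod n,
          r = of ExtGen.om * of (ExtGen.f i) * (of ExtGen.om)⁻¹ * (of (ExtGen.f (i + 1)))⁻¹)}

/-- The cylindrical braid group `Br_extg`. -/
abbrev BrExt (n : ℕ) : Type := PresentedGroup (extRels n)

/-- The generator `f_i` of `Br_extg`. -/
def fB (n : ℕ) (i : ZMod n) : BrExt n := PresentedGroup.of (ExtGen.f i)

/-- The generator `ω` of `Br_extg`. -/
def omB (n : ℕ) : BrExt n := PresentedGroup.of ExtGen.om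

/-- `y_i = f_{i−1}⁻¹ ⋯ f_2⁻¹ f_1⁻¹ · ω · f_{n−1} f_{n−2} ⋯ f_{i+1} f_i`, for `1 ≤ i ≤ n`. -/
def yB (n : ℕ) (i : ℕ) : BrExt n :=
  (((List.range (i - 1)).reverse.map (fun k => (fB n ((k + 1 : ℕ) : ZMod n))⁻¹)).prod)
    * omB n *
  (((List.range (n - i)).map (fun k => fB n ((n - 1 - k : ℕ) : ZMod n))).prod)

/-- `w_λ = y_1^{x_1} y_2^{x_2} ⋯ y_n^{x_n}` for `λ = (x_1, …, x_n) ∈ ℤ^n`. -/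
def wB (n : ℕ) (lam : Fin n → ℤ) : BrExt n :=
  (List.ofFn (fun k : Fin n => yB n ((k : ℕ) + 1) ^ lam k)).prod

namespace BrAux

variable {n : ℕ}

lemma rel_one {r : FreeGroup (ExtGen n)} (h : r ∈ extRels n) :
    PresentedGroup.mk (extRels n) r = 1 :=
  (QuotientGroup.eq_one_iff r).mpr (Subgroup.subset_normalClosure h)

lemma braidZ (h3 : 3 ≤ n) (i : ZMod n) :
    fB n i * fB n (i+1) * fB n i = fB n (i+1) * fB n i * fB n (i+1) := by
  have h := rel_one (n := n) (Or.inl ⟨i, h3, rfl⟩)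
  rw [map_mul, map_mul, map_mul, map_inv, map_mul, map_mul, mul_inv_eq_one] at h
  exact h

lemma commZ (i j : ZMod n) (h1 : j ≠ i - 1) (h2 : j ≠ i) (h3 : j ≠ i + 1) :
    fB n i * fB n j = fB n j * fB n i := by
  have h := rel_one (n := n) (Or.inr (Or.inl ⟨i, j, h1, h2, h3, rfl⟩))
  rw [map_mul, map_mul, map_inv, map_mul, mul_inv_eq_one] at h
  exact h

lemma omZ (i : ZMod n) : omB n * fB n i = fB n (i+1) * omB n := by
  have h := rel_one (n := n) (Or.inr (Or.inr ⟨i, rfl⟩))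
  rw [map_mul, map_mul, map_mul, map_inv, map_inv] at h
  have h2 : omB n * fB n i * (omB n)⁻¹ = fB n (i+1) := mul_inv_eq_one.mp h
  rw [← h2]
  group

def f (n : ℕ) (a : ℕ) : BrExt n := fB n (a : ZMod n)

abbrev w (n : ℕ) : BrExt n := omB n

lemma zdvd_of_cast_eq {a b : ℕ} (h : (a : ZMod n) = (b : ZMod n)) : (n:ℤ) ∣ (a:ℤ) - b := by
  have h2 : (((a:ℤ) - b : ℤ) : ZMod n) = 0 := by push_cast; rw [h]; ring
  exact (ZMod.intCast_zmod_eq_zero_iff_dvd _ _).mp h2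

lemma cast_ne_nat {a b : ℕ} (hne : a ≠ b) (h1 : a < b + n) (h2 : b < a + n) :
    (a : ZMod n) ≠ (b : ZMod n) := by
  intro h
  have hd := zdvd_of_cast_eq h
  have h0 : (a:ℤ) - b ≠ 0 := by omega
  have habs : (n:ℤ) ≤ |(a:ℤ) - b| :=
    Int.le_of_dvd (abs_pos.mpr h0) ((dvd_abs _ _).mpr hd)
  rcases abs_cases ((a:ℤ) - (b:ℤ)) with ⟨he,_⟩|⟨he,_⟩ <;> omega

lemma f_cast_eq {a b : ℕ} (h : (a : ZMod n) = (b : ZMod n)) : f n a = f n b := by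
  unfold f; rw [h]

lemma comm_nat {a b : ℕ} (h1 : b + 2 ≤ a) (h2 : a + 2 ≤ b + n) :
    f n a * f n b = f n b * f n a := by
  apply commZ
  · intro h
    have h' : ((b+1:ℕ) : ZMod n) = ((a:ℕ) : ZMod n) := by push_cast [h]; ring
    exact cast_ne_nat (by omega) (by omega) (by omega) h'
  · intro h
    exact cast_ne_nat (a := b) (b := a) (by omega) (by omega) (by omega) h
  · intro h
    have h' : ((b:ℕ) : ZMod n) = ((a+1:ℕ) : ZMod n) := by push_cast [h]; ring
    exact cast_ne_nat (by omega) (by omega) (by omega) h'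

lemma braid_nat (h3 : 3 ≤ n) (a : ℕ) :
    f n a * f n (a+1) * f n a = f n (a+1) * f n a * f n (a+1) := by
  unfold f; push_cast; exact braidZ h3 _

lemma om_nat (a : ℕ) : w n * f n a = f n (a+1) * w n := by
  unfold f; push_cast; exact omZ _

lemma f_om (a : ℕ) (ha : 1 ≤ a) : f n a * w n = w n * f n (a-1) := by
  have := om_nat (n := n) (a-1)
  rw [show a - 1 + 1 = a by omega] at this
  rw [this]

/-- ascending chain `f_a f_{a+1} ⋯ f_{a+m-1}` -/
def asc (n a m : ℕ) : BrExt n := ((List.range m).map (fun t => f n (a + t))).prod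

/-- descending chain `f_b f_{b-1} ⋯ f_{b-m+1}` -/
def dsc (n b m : ℕ) : BrExt n := ((List.range m).map (fun t => f n (b - t))).prod

lemma asc_zero (a : ℕ) : asc n a 0 = 1 := rfl
lemma dsc_zero (b : ℕ) : dsc n b 0 = 1 := rfl

lemma asc_succ_front (a m : ℕ) : asc n a (m+1) = f n a * asc n (a+1) m := by
  unfold asc
  rw [List.range_succ_eq_map, List.map_cons, List.prod_cons, List.map_map]
  rw [show a + 0 = a by omega]
  congr 1
  apply congrArg List.prod
  apply List.map_congr_left
  intro t _
  show f n (a + (t+1)) = f n (a+1+t)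
  rw [show a + (t+1) = a+1+t by omega]

lemma asc_succ_back (a m : ℕ) : asc n a (m+1) = asc n a m * f n (a+m) := by
  unfold asc
  rw [List.range_succ, List.map_append, List.prod_append]
  simp

lemma dsc_succ_front (b m : ℕ) : dsc n b (m+1) = f n b * dsc n (b-1) m := by
  unfold dsc
  rw [List.range_succ_eq_map, List.map_cons, List.prod_cons, List.map_map]
  rw [show b - 0 = b by omega]
  congr 1
  apply congrArg List.prod
  apply List.map_congr_left
  intro t _
  show f n (b - (t+1)) = f n (b-1-t)
  rw [show b - (t+1) = b-1-t by omega]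

lemma dsc_succ_back (b m : ℕ) : dsc n b (m+1) = dsc n b m * f n (b-m) := by
  unfold dsc
  rw [List.range_succ, List.map_append, List.prod_append]
  simp

lemma asc_one (a : ℕ) : asc n a 1 = f n a := by
  rw [show (1:ℕ) = 0 + 1 from rfl, asc_succ_back, asc_zero, one_mul, Nat.add_zero]
lemma dsc_one (b : ℕ) : dsc n b 1 = f n b := by
  rw [show (1:ℕ) = 0 + 1 from rfl, dsc_succ_back, dsc_zero, one_mul, Nat.sub_zero]

lemma asc_append (a m k : ℕ) : asc n a (m+k) = asc n a m * asc n (a+m) k := by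
  induction k with
  | zero => simp [asc_zero]
  | succ k ih =>
      rw [show m + (k+1) = (m+k)+1 by omega, asc_succ_back, ih, asc_succ_back, mul_assoc,
        show a + (m+k) = a + m + k by omega]

lemma dsc_append (b m k : ℕ) : dsc n b (m+k) = dsc n b m * dsc n (b-m) k := by
  induction k with
  | zero => simp [dsc_zero]
  | succ k ih =>
      rw [show m + (k+1) = (m+k)+1 by omega, dsc_succ_back, ih, dsc_succ_back, mul_assoc,
        show b - (m+k) = b - m - k by omega]

lemma commute_f_asc {j a m : ℕ}
    (h : ∀ t, t < m → f n j * f n (a+t) = f n (a+t) * f n j) :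
    Commute (f n j) (asc n a m) := by
  apply Commute.list_prod_right
  intro x hx
  simp only [List.mem_map, List.mem_range] at hx
  obtain ⟨t, ht, rfl⟩ := hx
  exact h t ht

lemma commute_f_dsc {j b m : ℕ}
    (h : ∀ t, t < m → f n j * f n (b-t) = f n (b-t) * f n j) :
    Commute (f n j) (dsc n b m) := by
  apply Commute.list_prod_right
  intro x hx
  simp only [List.mem_map, List.mem_range] at hx
  obtain ⟨t, ht, rfl⟩ := hx
  exact h t ht

/-- blocks commute: `asc a m` (letters in `[a, a+m-1]`) with `dsc b l` (letters in `[b-l+1, b]`),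
when `a+m-1 + 2 ≤ b-l+1` and `b + 2 ≤ a + n`. -/
lemma commute_asc_dsc {a m b l : ℕ} (h1 : a + m + l ≤ b) (h2 : b + 2 ≤ a + n) :
    Commute (asc n a m) (dsc n b l) := by
  apply Commute.list_prod_left
  intro x hx
  simp only [List.mem_map, List.mem_range] at hx
  obtain ⟨t, ht, rfl⟩ := hx
  apply commute_f_dsc
  intro u hu
  exact (comm_nat (by omega) (by omega)).symm

lemma w_asc (a m : ℕ) : w n * asc n a m = asc n (a+1) m * w n := by
  induction m generalizing a with
  | zero => simp [asc_zero]
  | succ m ih =>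
      rw [asc_succ_front, ← mul_assoc, om_nat, mul_assoc, ih (a+1), ← mul_assoc,
        ← asc_succ_front]

lemma asc_w (a m : ℕ) (ha : 1 ≤ a) : asc n a m * w n = w n * asc n (a-1) m := by
  have h := w_asc (n := n) (a-1) m
  rw [show a-1+1 = a by omega] at h
  rw [← h]

lemma w_dsc (b m : ℕ) (hmb : m ≤ b + 1) : w n * dsc n b m = dsc n (b+1) m * w n := by
  induction m generalizing b with
  | zero => simp [dsc_zero]
  | succ m ih =>
      rcases Nat.eq_zero_or_pos m with hm | hm
      · subst hm
        rw [dsc_one, dsc_one, om_nat]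
      · have hb : 1 ≤ b := by omega
        rw [dsc_succ_front, ← mul_assoc, om_nat, mul_assoc, ih (b-1) (by omega),
          show b-1+1 = b by omega, ← mul_assoc]
        rw [dsc_succ_front, show b+1-1 = b by omega]

lemma dsc_w (b m : ℕ) (hb : m ≤ b) : dsc n b m * w n = w n * dsc n (b-1) m := by
  rcases Nat.eq_zero_or_pos m with hm | hm
  · subst hm; simp [dsc_zero]
  · have h := w_dsc (n := n) (b-1) m (by omega)
    rw [show b-1+1 = b by omega] at h
    rw [← h]

lemma asc_rule (h3 : 3 ≤ n) : ∀ m a j, m ≤ n - 1 → a ≤ j → j + 2 ≤ a + m →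
    asc n a m * f n j = f n (j+1) * asc n a m := by
  intro m
  induction m with
  | zero => intro a j _ _ h; omega
  | succ m ih =>
    intro a j hm ha hj
    rcases Nat.lt_or_ge a j with haj | haj
    · rw [asc_succ_front, mul_assoc, ih (a+1) j (by omega) (by omega) (by omega), ← mul_assoc,
          ← comm_nat (show a + 2 ≤ j+1 by omega) (show j+1+2 ≤ a + n by omega), mul_assoc,
          ← asc_succ_front]
    · have hja : j = a := by omega
      subst hja
      rcases Nat.lt_or_ge m 2 with h1 | h1
      · have hm1 : m = 1 := by omega
        subst hm1
        have e2 : asc n j 2 = f n j * f n (j+1) := by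
          rw [show (2:ℕ) = 1 + 1 from rfl, asc_succ_back, asc_one]
        rw [e2, braid_nat h3 j, mul_assoc]
      · have e3 : asc n j (m+1) = f n j * (f n (j+1) * asc n (j+2) (m-1)) := by
          have e4 : asc n (j+1) m = f n (j+1) * asc n (j+2) (m-1) := by
            conv_lhs => rw [show m = (m-1)+1 by omega]
            rw [asc_succ_front, show j+1+1 = j+2 by omega]
          rw [asc_succ_front, e4]
        have hcomm : Commute (f n j) (asc n (j+2) (m-1)) := by
          apply commute_f_asc
          intro t ht
          exact (comm_nat (by omega) (by omega)).symm
        calc asc n j (m+1) * f n j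
            = f n j * f n (j+1) * (asc n (j+2) (m-1) * f n j) := by
              rw [e3]; group
          _ = f n j * f n (j+1) * f n j * asc n (j+2) (m-1) := by
              rw [← hcomm.eq]; group
          _ = f n (j+1) * f n j * f n (j+1) * asc n (j+2) (m-1) := by rw [braid_nat h3 j]
          _ = f n (j+1) * asc n j (m+1) := by rw [e3]; group

lemma dsc_rule (h3 : 3 ≤ n) : ∀ m b k, m ≤ n - 1 → m ≤ b + 1 → k ≤ b → b + 2 ≤ k + m →
    dsc n b m * f n k = f n (k-1) * dsc n b m := by
  intro m
  induction m with
  | zero => intro b k _ _ _ h; omega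
  | succ m ih =>
    intro b k hm hmb hk hbk
    rcases Nat.lt_or_ge k b with hkb | hkb
    · rw [dsc_succ_front, mul_assoc, ih (b-1) k (by omega) (by omega) (by omega) (by omega),
        ← mul_assoc, comm_nat (show (k-1) + 2 ≤ b by omega) (by omega), mul_assoc,
        ← dsc_succ_front]
    · have hkb' : k = b := by omega
      subst hkb'
      have hb1 : 1 ≤ k := by omega
      have br : f n (k-1) * f n k * f n (k-1) = f n k * f n (k-1) * f n k := by
        have h := braid_nat h3 (k-1)
        rw [show k-1+1 = k by omega] at h
        exact h
      rcases Nat.lt_or_ge m 2 with h1 | h1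
      · have hm1 : m = 1 := by omega
        subst hm1
        have e2 : dsc n k 2 = f n k * f n (k-1) := by
          rw [show (2:ℕ) = 1 + 1 from rfl, dsc_succ_back, dsc_one]
        rw [e2, ← br, mul_assoc]
      · have e3 : dsc n k (m+1) = f n k * (f n (k-1) * dsc n (k-2) (m-1)) := by
          have e4 : dsc n (k-1) m = f n (k-1) * dsc n (k-2) (m-1) := by
            conv_lhs => rw [show m = (m-1)+1 by omega]
            rw [dsc_succ_front, show k-1-1 = k-2 by omega]
          rw [dsc_succ_front, e4]
        have hcomm : Commute (f n k) (dsc n (k-2) (m-1)) := by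
          apply commute_f_dsc
          intro t ht
          exact comm_nat (by omega) (by omega)
        calc dsc n k (m+1) * f n k
            = f n k * f n (k-1) * (dsc n (k-2) (m-1) * f n k) := by
              rw [e3]; group
          _ = f n k * f n (k-1) * f n k * dsc n (k-2) (m-1) := by
              rw [← hcomm.eq]; group
          _ = f n (k-1) * f n k * f n (k-1) * dsc n (k-2) (m-1) := by rw [← br]
          _ = f n (k-1) * dsc n k (m+1) := by rw [e3]; group

lemma dsc_pass {D : BrExt n} : ∀ m b, m ≤ b + 1 →
    (∀ t, t < m → f n (b - t) * D = D * f n (b - t + 1)) →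
    dsc n b m * D = D * dsc n (b+1) m := by
  intro m
  induction m with
  | zero => intro b _ _; simp [dsc_zero]
  | succ m ih =>
    intro b hmb h
    rcases Nat.eq_zero_or_pos m with hm | hm
    · subst hm
      rw [dsc_one, dsc_one]
      have := h 0 (by omega)
      simpa using this
    · have hb : 1 ≤ b := by omega
      have h0 : f n b * D = D * f n (b+1) := by
        have := h 0 (by omega); simpa using this
      rw [dsc_succ_front, mul_assoc, ih (b-1) (by omega) ?hstep,
        show b-1+1 = b by omega, ← mul_assoc, h0, mul_assoc]
      rw [dsc_succ_front, show b+1-1 = b by omega]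
      case hstep =>
        intro t ht
        have := h (t+1) (by omega)
        rw [show b - (t+1) = b - 1 - t by omega] at this
        exact this

lemma asc_pass {D : BrExt n} : ∀ m a,
    (∀ t, t < m → f n (a + 1 + t) * D = D * f n (a + t)) →
    asc n (a+1) m * D = D * asc n a m := by
  intro m
  induction m with
  | zero => intro a _; simp [asc_zero]
  | succ m ih =>
    intro a h
    have h0 : f n (a+1) * D = D * f n a := by
      have := h 0 (by omega); simpa using this
    rw [asc_succ_front, mul_assoc, ih (a+1) ?hstep, ← mul_assoc, h0, mul_assoc,
      ← asc_succ_front]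
    case hstep =>
      intro t ht
      have := h (t+1) (by omega)
      rw [show a + 1 + (t+1) = a + 1 + 1 + t by omega, show a + (t+1) = a+1+t by omega] at this
      exact this

lemma yB_eq (i : ℕ) : yB n i = (asc n 1 (i-1))⁻¹ * w n * dsc n (n-1) (n-i) := by
  unfold yB
  congr 2
  symm
  unfold asc
  rw [List.prod_inv_reverse, List.map_map, List.map_reverse]
  apply congrArg List.prod
  apply congrArg List.reverse
  apply List.map_congr_left
  intro t _
  simp only [Function.comp_apply]
  show (f n (1+t))⁻¹ = (fB n ((t+1:ℕ) : ZMod n))⁻¹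
  rw [show 1+t = t+1 by omega]
  rfl

lemma y_rec (i : ℕ) (h1 : 1 ≤ i) (h2 : i ≤ n-1) :
    yB n (i+1) = (f n i)⁻¹ * yB n i * (f n i)⁻¹ := by
  rw [yB_eq, yB_eq]
  have hP : asc n 1 ((i+1)-1) = asc n 1 (i-1) * f n i := by
    rw [show (i+1)-1 = (i-1)+1 by omega, asc_succ_back, show 1 + (i-1) = i by omega]
  have hR : dsc n (n-1) (n-i) = dsc n (n-1) (n-(i+1)) * f n i := by
    rw [show n-i = (n-(i+1))+1 by omega, dsc_succ_back, show n-1-(n-(i+1)) = i by omega]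
  rw [hP, hR, mul_inv_rev]
  group

lemma starStep (i s : ℕ) (hn2 : 2 ≤ n) (hi1 : 1 ≤ i) (hin : i ≤ n-1) (hs : s + 1 ≤ n-i) :
    dsc n (n-1-s) (n-i-s) * ((asc n 1 i)⁻¹ * w n)
      = ((asc n 1 (i-1))⁻¹ * w n) * dsc n (n-1-(s+1)) (n-i-(s+1)) := by
  have hD : dsc n (n-1-s) (n-i-s) = dsc n (n-1-s) (n-i-s-1) * f n i := by
    conv_lhs => rw [show n-i-s = (n-i-s-1)+1 by omega]
    rw [dsc_succ_back, show n-1-s-(n-i-s-1) = i by omega]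
  have hP : asc n 1 i = asc n 1 (i-1) * f n i := by
    conv_lhs => rw [show i = (i-1)+1 by omega]
    rw [asc_succ_back, show 1+(i-1) = i by omega]
  have hcomm : Commute ((asc n 1 (i-1))⁻¹) (dsc n (n-1-s) (n-i-s-1)) :=
    (commute_asc_dsc (by omega) (by omega)).inv_left
  have hE : dsc n (n-1-s) (n-i-s-1) * w n = w n * dsc n (n-1-s-1) (n-i-s-1) :=
    dsc_w _ _ (by omega)
  calc dsc n (n-1-s) (n-i-s) * ((asc n 1 i)⁻¹ * w n)
      = dsc n (n-1-s) (n-i-s-1) * (asc n 1 (i-1))⁻¹ * w n := by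
        rw [hD, hP, mul_inv_rev]; group
    _ = (asc n 1 (i-1))⁻¹ * (dsc n (n-1-s) (n-i-s-1) * w n) := by
        rw [← hcomm.eq]; group
    _ = ((asc n 1 (i-1))⁻¹ * w n) * dsc n (n-1-s-1) (n-i-s-1) := by
        rw [hE]; group
    _ = ((asc n 1 (i-1))⁻¹ * w n) * dsc n (n-1-(s+1)) (n-i-(s+1)) := by
        rw [show n-1-s-1 = n-1-(s+1) by omega, show n-i-s-1 = n-i-(s+1) by omega]

lemma star (i : ℕ) (hn2 : 2 ≤ n) (hi1 : 1 ≤ i) (hin : i ≤ n-1) :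
    dsc n (n-1) (n-i) * ((asc n 1 i)⁻¹ * w n)^(n-i) = ((asc n 1 (i-1))⁻¹ * w n)^(n-i) := by
  suffices h : ∀ s, s ≤ n-i → dsc n (n-1) (n-i) * ((asc n 1 i)⁻¹ * w n)^(n-i)
      = ((asc n 1 (i-1))⁻¹ * w n)^s * dsc n (n-1-s) (n-i-s) * ((asc n 1 i)⁻¹ * w n)^(n-i-s) by
    have h2 := h (n-i) le_rfl
    rw [show n-i-(n-i) = 0 by omega] at h2
    simpa [dsc_zero] using h2
  intro s
  induction s with
  | zero => intro _; simp
  | succ s ih =>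
    intro hs
    rw [ih (by omega)]
    have hpow : ((asc n 1 i)⁻¹ * w n)^(n-i-s)
        = ((asc n 1 i)⁻¹ * w n) * ((asc n 1 i)⁻¹ * w n)^(n-i-(s+1)) := by
      rw [← pow_succ']
      congr 1
      omega
    rw [hpow, ← mul_assoc, mul_assoc _ (dsc n (n-1-s) (n-i-s)),
      starStep i s hn2 hi1 hin (by omega), ← mul_assoc, ← mul_assoc, mul_assoc _ _ (w n),
      ← pow_succ]

lemma prodY (hn2 : 2 ≤ n) : ∀ m, m ≤ n →
    ((List.range m).map (fun k => yB n (n - m + 1 + k))).prod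
      = ((asc n 1 (n-m))⁻¹ * w n)^m := by
  intro m
  induction m with
  | zero => intro _; simp
  | succ m ih =>
    intro hm
    rw [List.range_succ_eq_map, List.map_cons, List.prod_cons, List.map_map]
    have hmap : ((List.range m).map (Function.comp (fun k => yB n (n - (m+1) + 1 + k)) (fun t => t+1))).prod
        = ((asc n 1 (n-m))⁻¹ * w n)^m := by
      rw [← ih (by omega)]
      apply congrArg List.prod
      apply List.map_congr_left
      intro t _
      simp only [Function.comp_apply]
      congr 1
      omega
    rw [hmap]
    have hy : yB n (n - (m+1) + 1 + 0) = (asc n 1 (n-(m+1)))⁻¹ * w n * dsc n (n-1) m := by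
      rw [show n - (m+1) + 1 + 0 = n - m by omega, yB_eq,
        show n - m - 1 = n - (m+1) by omega, show n - (n-m) = m by omega]
    rw [hy]
    rcases Nat.eq_zero_or_pos m with hm0 | hm0
    · subst hm0
      simp [dsc_zero, pow_one]
    · have hstar := star (n-m) hn2 (by omega) (by omega)
      rw [show n-(n-m) = m by omega, show n-m-1 = n-(m+1) by omega] at hstar
      rw [mul_assoc, hstar, ← pow_succ']

lemma partB (hn2 : 2 ≤ n) :
    ((List.range n).map (fun k => yB n (k + 1))).prod = omB n ^ n := by
  have h := prodY hn2 n le_rfl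
  rw [show n - n = 0 by omega] at h
  simp only [asc_zero, inv_one, one_mul] at h
  rw [← h]
  apply congrArg List.prod
  apply List.map_congr_left
  intro t _
  congr 1
  omega

lemma swap_conj {G : Type*} [Group G] {X a b : G} (h : X * a = b * X) :
    a * X⁻¹ = X⁻¹ * b := by
  calc a * X⁻¹ = X⁻¹ * (X * a) * X⁻¹ := by group
    _ = X⁻¹ * (b * X) * X⁻¹ := by rw [h]
    _ = X⁻¹ * b := by group

lemma y1_comm_f (h3 : 3 ≤ n) (j : ℕ) (hj2 : 2 ≤ j) (hjn : j ≤ n-1) :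
    f n j * yB n 1 = yB n 1 * f n j := by
  rw [yB_eq]
  simp only [show (1:ℕ)-1 = 0 from rfl, asc_zero, inv_one, one_mul]
  rw [← mul_assoc, f_om j (by omega), mul_assoc,
    ← dsc_rule h3 (n-1) (n-1) j (by omega) (by omega) (by omega) (by omega), ← mul_assoc]

lemma y_decomp (i : ℕ) (h1 : 1 ≤ i) (h2 : i ≤ n) :
    yB n i = (asc n 1 (i-1))⁻¹ * yB n 1 * (dsc n (i-1) (i-1))⁻¹ := by
  rw [yB_eq, yB_eq (i := 1)]
  simp only [show (1:ℕ)-1 = 0 from rfl, asc_zero, inv_one, one_mul]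
  have hsplit : dsc n (n-1) (n-1) = dsc n (n-1) (n-i) * dsc n (i-1) (i-1) := by
    conv_rhs => rw [show i-1 = n-1-(n-i) by omega]
    rw [← dsc_append, show n-i+(n-1-(n-i)) = n-1 by omega]
  rw [hsplit]
  group

lemma y_comm_f (hn2 : 2 ≤ n) (i j : ℕ) (hi1 : 1 ≤ i) (hin : i ≤ n)
    (hj1 : 1 ≤ j) (hjn : j ≤ n-1) (hne1 : j ≠ i) (hne2 : j + 1 ≠ i) :
    f n j * yB n i = yB n i * f n j := by
  have h3 : 3 ≤ n := by omega
  rw [y_decomp i hi1 hin]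
  rcases Nat.lt_or_ge i j with hij | hij
  · -- j ≥ i+1
    have key1 : f n j * (asc n 1 (i-1))⁻¹ = (asc n 1 (i-1))⁻¹ * f n j := by
      have hc : Commute (f n j) (asc n 1 (i-1)) := by
        apply commute_f_asc
        intro t ht
        exact comm_nat (by omega) (by omega)
      exact hc.inv_right.eq
    have key2 : f n j * yB n 1 = yB n 1 * f n j := y1_comm_f h3 j (by omega) hjn
    have key3 : f n j * (dsc n (i-1) (i-1))⁻¹ = (dsc n (i-1) (i-1))⁻¹ * f n j := by
      have hc : Commute (f n j) (dsc n (i-1) (i-1)) := by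
        apply commute_f_dsc
        intro t ht
        exact comm_nat (by omega) (by omega)
      exact hc.inv_right.eq
    calc f n j * ((asc n 1 (i-1))⁻¹ * yB n 1 * (dsc n (i-1) (i-1))⁻¹)
        = (f n j * (asc n 1 (i-1))⁻¹) * yB n 1 * (dsc n (i-1) (i-1))⁻¹ := by group
      _ = ((asc n 1 (i-1))⁻¹ * f n j) * yB n 1 * (dsc n (i-1) (i-1))⁻¹ := by rw [key1]
      _ = (asc n 1 (i-1))⁻¹ * (f n j * yB n 1) * (dsc n (i-1) (i-1))⁻¹ := by group
      _ = (asc n 1 (i-1))⁻¹ * (yB n 1 * f n j) * (dsc n (i-1) (i-1))⁻¹ := by rw [key2]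
      _ = (asc n 1 (i-1))⁻¹ * yB n 1 * (f n j * (dsc n (i-1) (i-1))⁻¹) := by group
      _ = (asc n 1 (i-1))⁻¹ * yB n 1 * ((dsc n (i-1) (i-1))⁻¹ * f n j) := by rw [key3]
      _ = (asc n 1 (i-1))⁻¹ * yB n 1 * (dsc n (i-1) (i-1))⁻¹ * f n j := by group
  · -- j ≤ i - 2
    have hji : j + 2 ≤ i := by omega
    have key1 : f n j * (asc n 1 (i-1))⁻¹ = (asc n 1 (i-1))⁻¹ * f n (j+1) :=
      swap_conj (asc_rule h3 (i-1) 1 j (by omega) (by omega) (by omega))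
    have key2 : f n (j+1) * yB n 1 = yB n 1 * f n (j+1) :=
      y1_comm_f h3 (j+1) (by omega) (by omega)
    have key3 : f n (j+1) * (dsc n (i-1) (i-1))⁻¹ = (dsc n (i-1) (i-1))⁻¹ * f n j := by
      have hd := dsc_rule h3 (i-1) (i-1) (j+1) (by omega) (by omega) (by omega) (by omega)
      rw [show j+1-1 = j by omega] at hd
      exact swap_conj hd
    calc f n j * ((asc n 1 (i-1))⁻¹ * yB n 1 * (dsc n (i-1) (i-1))⁻¹)
        = (f n j * (asc n 1 (i-1))⁻¹) * yB n 1 * (dsc n (i-1) (i-1))⁻¹ := by group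
      _ = ((asc n 1 (i-1))⁻¹ * f n (j+1)) * yB n 1 * (dsc n (i-1) (i-1))⁻¹ := by rw [key1]
      _ = (asc n 1 (i-1))⁻¹ * (f n (j+1) * yB n 1) * (dsc n (i-1) (i-1))⁻¹ := by group
      _ = (asc n 1 (i-1))⁻¹ * (yB n 1 * f n (j+1)) * (dsc n (i-1) (i-1))⁻¹ := by rw [key2]
      _ = (asc n 1 (i-1))⁻¹ * yB n 1 * (f n (j+1) * (dsc n (i-1) (i-1))⁻¹) := by group
      _ = (asc n 1 (i-1))⁻¹ * yB n 1 * ((dsc n (i-1) (i-1))⁻¹ * f n j) := by rw [key3]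
      _ = (asc n 1 (i-1))⁻¹ * yB n 1 * (dsc n (i-1) (i-1))⁻¹ * f n j := by group

lemma abstract_adj {G : Type*} [Group G] (P Pu Q Q1 R W fi f1 fn fn1 : G)
    (hR : R = Q * fi)
    (S1 : P * Q = Q * P)
    (S2 : Q * W = W * Q1)
    (S3 : Q1 * R = R * Q)
    (S4 : W * R = fn * Q * W)
    (S5 : W * P = Pu * W)
    (S6 : W * fn = fn1 * W)
    (S7 : fn1 = f1)
    (S8 : Pu * P * fi = f1 * (Pu * P)) :
    fi * (P⁻¹ * W * Q * (P⁻¹ * W * Q)) = (P⁻¹ * W * Q * (P⁻¹ * W * Q)) * fi := by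
  have S1' : Q * P⁻¹ = P⁻¹ * Q := by
    calc Q * P⁻¹ = P⁻¹ * (P * Q) * P⁻¹ := by group
      _ = P⁻¹ * (Q * P) * P⁻¹ := by rw [S1]
      _ = P⁻¹ * Q := by group
  have S5' : W * P⁻¹ = Pu⁻¹ * W := by
    calc W * P⁻¹ = Pu⁻¹ * (Pu * W) * P⁻¹ := by group
      _ = Pu⁻¹ * (W * P) * P⁻¹ := by rw [← S5]
      _ = Pu⁻¹ * W := by group
  have key : fi * (P⁻¹ * Pu⁻¹) = P⁻¹ * Pu⁻¹ * f1 := by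
    calc fi * (P⁻¹ * Pu⁻¹)
        = (Pu*P)⁻¹ * (Pu * P * fi) * ((Pu*P)⁻¹ * (Pu*P)) * (Pu*P)⁻¹ := by group
      _ = (Pu*P)⁻¹ * (f1 * (Pu * P)) * ((Pu*P)⁻¹ * (Pu*P)) * (Pu*P)⁻¹ := by rw [S8]
      _ = P⁻¹ * Pu⁻¹ * f1 := by group
  have EZ : P⁻¹ * W * Q * (P⁻¹ * W * Q) = P⁻¹ * Pu⁻¹ * (W * Q * (W * Q)) := by
    calc P⁻¹ * W * Q * (P⁻¹ * W * Q)
        = P⁻¹ * W * (Q * P⁻¹) * W * Q := by group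
      _ = P⁻¹ * W * (P⁻¹ * Q) * W * Q := by rw [S1']
      _ = P⁻¹ * (W * P⁻¹) * (Q * W * Q) := by group
      _ = P⁻¹ * (Pu⁻¹ * W) * (Q * W * Q) := by rw [S5']
      _ = P⁻¹ * Pu⁻¹ * (W * Q * (W * Q)) := by group
  have ER : (P⁻¹ * W * Q * (P⁻¹ * W * Q)) * fi = P⁻¹ * Pu⁻¹ * (f1 * (W * Q * (W * Q))) := by
    calc (P⁻¹ * W * Q * (P⁻¹ * W * Q)) * fi
        = P⁻¹ * W * (Q * P⁻¹) * W * (Q * fi) := by group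
      _ = P⁻¹ * W * (P⁻¹ * Q) * W * (Q * fi) := by rw [S1']
      _ = P⁻¹ * W * P⁻¹ * (Q * W) * R := by rw [← hR]; group
      _ = P⁻¹ * W * P⁻¹ * (W * Q1) * R := by rw [S2]
      _ = P⁻¹ * W * P⁻¹ * W * (Q1 * R) := by group
      _ = P⁻¹ * W * P⁻¹ * W * (R * Q) := by rw [S3]
      _ = P⁻¹ * (W * P⁻¹) * (W * R) * Q := by group
      _ = P⁻¹ * (Pu⁻¹ * W) * (fn * Q * W) * Q := by rw [S5', S4]
      _ = P⁻¹ * Pu⁻¹ * (W * fn) * (Q * W * Q) := by group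
      _ = P⁻¹ * Pu⁻¹ * (fn1 * W) * (Q * W * Q) := by rw [S6]
      _ = P⁻¹ * Pu⁻¹ * (f1 * (W * Q * (W * Q))) := by rw [S7]; group
  calc fi * (P⁻¹ * W * Q * (P⁻¹ * W * Q))
      = fi * (P⁻¹ * Pu⁻¹) * (W * Q * (W * Q)) := by rw [EZ]; group
    _ = P⁻¹ * Pu⁻¹ * f1 * (W * Q * (W * Q)) := by rw [key]
    _ = P⁻¹ * Pu⁻¹ * (f1 * (W * Q * (W * Q))) := by group
    _ = (P⁻¹ * W * Q * (P⁻¹ * W * Q)) * fi := by rw [ER]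

lemma y_adj (hn2 : 2 ≤ n) (i : ℕ) (hi1 : 1 ≤ i) (hin : i ≤ n-1) :
    yB n i * yB n (i+1) = yB n (i+1) * yB n i := by
  have hRQ : dsc n (n-1) (n-i) = dsc n (n-1) (n-1-i) * f n i := by
    conv_lhs => rw [show n-i = (n-1-i)+1 by omega]
    rw [dsc_succ_back, show n-1-(n-1-i) = i by omega]
  have S1c : asc n 1 (i-1) * dsc n (n-1) (n-1-i) = dsc n (n-1) (n-1-i) * asc n 1 (i-1) :=
    (commute_asc_dsc (by omega) (by omega)).eq
  have S2c : dsc n (n-1) (n-1-i) * w n = w n * dsc n (n-2) (n-1-i) := by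
    have h := dsc_w (n := n) (n-1) (n-1-i) (by omega)
    rw [show n-1-1 = n-2 by omega] at h
    exact h
  have S3c : dsc n (n-2) (n-1-i) * dsc n (n-1) (n-i) = dsc n (n-1) (n-i) * dsc n (n-1) (n-1-i) := by
    have h := dsc_pass (D := dsc n (n-1) (n-i)) (n-1-i) (n-2) (by omega) ?hh
    · rw [show n-2+1 = n-1 by omega] at h
      exact h
    case hh =>
      intro t ht
      have h3 : 3 ≤ n := by omega
      have hd := dsc_rule h3 (n-i) (n-1) (n-1-t) (by omega) (by omega) (by omega) (by omega)
      rw [show n-2-t+1 = n-1-t by omega, show n-2-t = n-1-t-1 by omega]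
      exact hd.symm
  have S4c : w n * dsc n (n-1) (n-i) = f n n * dsc n (n-1) (n-1-i) * w n := by
    have h := w_dsc (n := n) (n-1) (n-i) (by omega)
    rw [show n-1+1 = n by omega] at h
    have h2 : dsc n n (n-i) = f n n * dsc n (n-1) (n-1-i) := by
      conv_lhs => rw [show n-i = (n-1-i)+1 by omega]
      rw [dsc_succ_front]
    rw [h, h2]
  have S5c : w n * asc n 1 (i-1) = asc n 2 (i-1) * w n := by
    have h := w_asc (n := n) 1 (i-1)
    rw [show (1:ℕ)+1 = 2 from rfl] at h
    exact h
  have S6c : w n * f n n = f n (n+1) * w n := om_nat n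
  have S7c : f n (n+1) = f n 1 := by
    apply f_cast_eq
    push_cast [ZMod.natCast_self]
    simp
  have S8c : asc n 2 (i-1) * asc n 1 (i-1) * f n i = f n 1 * (asc n 2 (i-1) * asc n 1 (i-1)) := by
    rcases Nat.eq_or_lt_of_le hi1 with h1 | h1
    · rw [← h1]
      simp [asc_zero]
    · have h3 : 3 ≤ n := by omega
      have hC : asc n 1 (i-1) * f n i = asc n 1 i := by
        conv_rhs => rw [show i = (i-1)+1 by omega]
        rw [asc_succ_back, show 1+(i-1) = i by omega]
      have hfront : asc n 1 i = f n 1 * asc n 2 (i-1) := by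
        conv_lhs => rw [show i = (i-1)+1 by omega]
        rw [asc_succ_front, show (1:ℕ)+1 = 2 from rfl]
      have hpass : asc n 2 (i-1) * asc n 1 i = asc n 1 i * asc n 1 (i-1) := by
        have h := asc_pass (D := asc n 1 i) (i-1) 1 ?hh
        · rw [show (1:ℕ)+1 = 2 from rfl] at h
          exact h
        case hh =>
          intro t ht
          have hr := asc_rule h3 i 1 (1+t) (by omega) (by omega) (by omega)
          rw [show (1:ℕ)+1+t = 1+t+1 by omega]
          exact hr.symm
      calc asc n 2 (i-1) * asc n 1 (i-1) * f n i
          = asc n 2 (i-1) * (asc n 1 (i-1) * f n i) := by group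
        _ = asc n 2 (i-1) * asc n 1 i := by rw [hC]
        _ = asc n 1 i * asc n 1 (i-1) := hpass
        _ = f n 1 * asc n 2 (i-1) * asc n 1 (i-1) := by rw [hfront]
        _ = f n 1 * (asc n 2 (i-1) * asc n 1 (i-1)) := by group
  have habs := abstract_adj (asc n 1 (i-1)) (asc n 2 (i-1)) (dsc n (n-1) (n-1-i))
    (dsc n (n-2) (n-1-i)) (dsc n (n-1) (n-i)) (w n) (f n i) (f n 1) (f n n) (f n (n+1))
    hRQ S1c S2c S3c S4c S5c S6c S7c S8c
  have hyi : yB n i = (asc n 1 (i-1))⁻¹ * w n * dsc n (n-1) (n-1-i) * f n i := by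
    rw [yB_eq, hRQ]
    group
  have hyi1 : yB n (i+1) = (f n i)⁻¹ * ((asc n 1 (i-1))⁻¹ * w n * dsc n (n-1) (n-1-i)) := by
    rw [yB_eq, show n-(i+1) = n-1-i by omega, show (i+1)-1 = (i-1)+1 by omega,
      asc_succ_back, show 1+(i-1) = i by omega, mul_inv_rev]
    group
  rw [hyi, hyi1]
  calc (asc n 1 (i-1))⁻¹ * w n * dsc n (n-1) (n-1-i) * f n i *
        ((f n i)⁻¹ * ((asc n 1 (i-1))⁻¹ * w n * dsc n (n-1) (n-1-i)))
      = ((asc n 1 (i-1))⁻¹ * w n * dsc n (n-1) (n-1-i) *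
          ((asc n 1 (i-1))⁻¹ * w n * dsc n (n-1) (n-1-i))) := by group
    _ = (f n i)⁻¹ * (f n i * ((asc n 1 (i-1))⁻¹ * w n * dsc n (n-1) (n-1-i) *
          ((asc n 1 (i-1))⁻¹ * w n * dsc n (n-1) (n-1-i)))) := by group
    _ = (f n i)⁻¹ * (((asc n 1 (i-1))⁻¹ * w n * dsc n (n-1) (n-1-i) *
          ((asc n 1 (i-1))⁻¹ * w n * dsc n (n-1) (n-1-i))) * f n i) := by rw [habs]
    _ = (f n i)⁻¹ * ((asc n 1 (i-1))⁻¹ * w n * dsc n (n-1) (n-1-i)) *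
          ((asc n 1 (i-1))⁻¹ * w n * dsc n (n-1) (n-1-i) * f n i) := by group

lemma y_comm (hn2 : 2 ≤ n) (i : ℕ) (hi1 : 1 ≤ i) :
    ∀ j, i < j → j ≤ n → yB n i * yB n j = yB n j * yB n i := by
  intro j
  induction j with
  | zero => intro h _; omega
  | succ j ih =>
    intro hij hjn
    rcases Nat.eq_or_lt_of_le (show i+1 ≤ j+1 by omega) with he | hlt
    · have : i = j := by omega
      subst this
      exact y_adj hn2 i hi1 (by omega)
    · have hyrec : yB n (j+1) = (f n j)⁻¹ * yB n j * (f n j)⁻¹ :=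
        y_rec j (by omega) (by omega)
      have hcf : Commute (yB n i) (f n j) :=
        (show Commute (f n j) (yB n i) from
          y_comm_f hn2 i j hi1 (by omega) (by omega) (by omega) (by omega) (by omega)).symm
      have hcy : Commute (yB n i) (yB n j) := ih (by omega) (by omega)
      rw [hyrec]
      exact ((hcf.inv_right.mul_right hcy).mul_right hcf.inv_right).eq

lemma partA (hn2 : 2 ≤ n) (i j : ℕ) (hi1 : 1 ≤ i) (hin : i ≤ n) (hj1 : 1 ≤ j) (hjn : j ≤ n) :
    yB n i * yB n j = yB n j * yB n i := by
  rcases lt_trichotomy i j with h | h | h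
  · exact y_comm hn2 i hi1 j h hjn
  · rw [h]
  · exact (y_comm hn2 j hj1 i h hin).symm

/-! ### Part (c): representation on permutations of ℤ -/

lemma castZ_shift (a : ℤ) (b : ℤ) : ((a + b : ℤ) : ZMod n) = (a : ZMod n) + (b : ZMod n) := by
  push_cast; ring

/-- `s_i` as a function on ℤ -/
def sFun (n : ℕ) (i : ZMod n) : ℤ → ℤ := fun x =>
  if (x : ZMod n) = i then x + 1 else if (x : ZMod n) = i + 1 then x - 1 else x

lemma one_ne_zero' (hn : 2 ≤ n) : (1 : ZMod n) ≠ 0 := by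
  have h := cast_ne_nat (n := n) (a := 1) (b := 0) (by omega) (by omega) (by omega)
  simpa using h

lemma two_ne_zero' (hn : 3 ≤ n) : (2 : ZMod n) ≠ 0 := by
  have h := cast_ne_nat (n := n) (a := 2) (b := 0) (by omega) (by omega) (by omega)
  simpa using h

lemma sFun_eq1 {i : ZMod n} {x : ℤ} (h : (x : ZMod n) = i) : sFun n i x = x + 1 := by
  unfold sFun; rw [if_pos h]

lemma sFun_eq2 (hn : (1:ZMod n) ≠ 0) {i : ZMod n} {x : ℤ} (h : (x : ZMod n) = i + 1) :
    sFun n i x = x - 1 := by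
  unfold sFun
  rw [if_neg, if_pos h]
  rw [h]
  intro hc
  exact hn (by linear_combination hc)

lemma sFun_ne {i : ZMod n} {x : ℤ} (h1 : (x : ZMod n) ≠ i) (h2 : (x : ZMod n) ≠ i + 1) :
    sFun n i x = x := by
  unfold sFun; rw [if_neg h1, if_neg h2]

lemma sFun_invol (hn : 2 ≤ n) (i : ZMod n) : Function.Involutive (sFun n i) := by
  have h1 := one_ne_zero' hn
  intro x
  by_cases hx : (x : ZMod n) = i
  · rw [sFun_eq1 hx, sFun_eq2 h1 (by rw [castZ_shift]; rw [hx]; simp)]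
    ring
  · by_cases hx2 : (x : ZMod n) = i + 1
    · rw [sFun_eq2 h1 hx2, sFun_eq1 (by rw [show x - 1 = x + (-1) by ring, castZ_shift, hx2]; simp)]
      ring
    · rw [sFun_ne hx hx2, sFun_ne hx hx2]

/-- `s_i` as a permutation of ℤ -/
def sPerm (hn : 2 ≤ n) (i : ZMod n) : Equiv.Perm ℤ := (sFun_invol hn i).toPerm

@[simp] lemma sPerm_apply (hn : 2 ≤ n) (i : ZMod n) (x : ℤ) : sPerm hn i x = sFun n i x := rfl

lemma sPerm_inv (hn : 2 ≤ n) (i : ZMod n) : (sPerm hn i)⁻¹ = sPerm hn i := by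
  ext x
  simp [sPerm, Equiv.Perm.inv_def]

/-- the shift permutation -/
def sh : Equiv.Perm ℤ := Equiv.addRight 1

@[simp] lemma sh_apply (x : ℤ) : sh x = x + 1 := rfl
@[simp] lemma sh_inv_apply (x : ℤ) : sh⁻¹ x = x - 1 := rfl


lemma castp (x : ℤ) : ((x + 1 : ℤ) : ZMod n) = (x : ZMod n) + 1 := by push_cast; ring
lemma castm (x : ℤ) : ((x - 1 : ℤ) : ZMod n) = (x : ZMod n) - 1 := by push_cast; ring


lemma perm_braid (hn : 3 ≤ n) (i : ZMod n) :
    sPerm (show 2 ≤ n by omega) i * sPerm (show 2 ≤ n by omega) (i+1) * sPerm (show 2 ≤ n by omega) i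
      = sPerm (show 2 ≤ n by omega) (i+1) * sPerm (show 2 ≤ n by omega) i *
        sPerm (show 2 ≤ n by omega) (i+1) := by
  have e1 : (1 : ZMod n) ≠ 0 := one_ne_zero' (by omega)
  have e2 : (2 : ZMod n) ≠ 0 := two_ne_zero' hn
  have nA : i + 1 ≠ i := fun h => e1 (by linear_combination h)
  have nB : i + 1 + 1 ≠ i + 1 := fun h => e1 (by linear_combination h)
  have nC : i + 1 + 1 ≠ i := fun h => e2 (by linear_combination h)
  have nA' : i ≠ i + 1 := fun h => nA h.symm
  have nB' : i + 1 ≠ i + 1 + 1 := fun h => nB h.symm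
  have nC' : i ≠ i + 1 + 1 := fun h => nC h.symm
  ext x
  simp only [Equiv.Perm.mul_apply, sPerm_apply]
  by_cases h1 : (x : ZMod n) = i
  · have k1 : ((x + 1 : ℤ) : ZMod n) = i + 1 := by rw [castp, h1]
    have k2 : ((x + 1 + 1 : ℤ) : ZMod n) = i + 1 + 1 := by rw [castp, k1]
    rw [sFun_eq1 h1, sFun_eq1 k1,
      sFun_ne (i := i) (x := x + 1 + 1) (by rw [k2]; exact nC) (by rw [k2]; exact nB),
      sFun_ne (i := i+1) (x := x) (by rw [h1]; exact nA') (by rw [h1]; exact nC'),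
      sFun_eq1 h1, sFun_eq1 k1]
  · by_cases h2 : (x : ZMod n) = i + 1
    · have k1 : ((x - 1 : ℤ) : ZMod n) = i := by rw [castm, h2]; ring
      have k2 : ((x + 1 : ℤ) : ZMod n) = i + 1 + 1 := by rw [castp, h2]
      rw [sFun_eq2 e1 h2, sFun_ne (i := i+1) (by rw [k1]; exact nA') (by rw [k1]; exact nC'),
        sFun_eq1 k1, sFun_eq1 (i := i+1) h2,
        sFun_ne (i := i) (x := x + 1) (by rw [k2]; exact nC) (by rw [k2]; exact nB),
        sFun_eq2 e1 (i := i+1) (x := x + 1) (by rw [k2])]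
      ring
    · by_cases h3 : (x : ZMod n) = i + 1 + 1
      · have k1 : ((x - 1 : ℤ) : ZMod n) = i + 1 := by rw [castm, h3]; ring
        have k2 : ((x - 1 - 1 : ℤ) : ZMod n) = i := by rw [castm, k1]; ring
        rw [sFun_ne (i := i) (x := x) h1 h2, sFun_eq2 e1 (i := i+1) (x := x) (by rw [h3]),
          sFun_eq2 e1 (i := i) (x := x - 1) k1,
          sFun_ne (i := i+1) (x := x - 1 - 1) (by rw [k2]; exact nA') (by rw [k2]; exact nC')]
      · have h3' : (x : ZMod n) ≠ (i + 1) + 1 := h3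
        rw [sFun_ne (i := i) (x := x) h1 h2, sFun_ne (i := i+1) (x := x) h2 h3',
          sFun_ne (i := i) (x := x) h1 h2, sFun_ne (i := i+1) (x := x) h2 h3']

lemma perm_comm (hn : 2 ≤ n) (i j : ZMod n) (hj1 : j ≠ i - 1) (hj2 : j ≠ i) (hj3 : j ≠ i + 1) :
    sPerm hn i * sPerm hn j = sPerm hn j * sPerm hn i := by
  have e1 : (1 : ZMod n) ≠ 0 := one_ne_zero' hn
  have ne1 : i ≠ j := fun h => hj2 h.symm
  have ne2 : i + 1 ≠ j := fun h => hj3 h.symm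
  have ne3 : i ≠ j + 1 := fun h => hj1 (by linear_combination -h)
  have ne4 : i + 1 ≠ j + 1 := fun h => hj2 (by linear_combination -h)
  ext x
  simp only [Equiv.Perm.mul_apply, sPerm_apply]
  by_cases h1 : (x : ZMod n) = i
  · have k1 : ((x + 1 : ℤ) : ZMod n) = i + 1 := by rw [castp, h1]
    rw [sFun_ne (i := j) (x := x) (by rw [h1]; exact ne1) (by rw [h1]; exact ne3), sFun_eq1 h1,
      sFun_ne (i := j) (x := x + 1) (by rw [k1]; exact ne2) (by rw [k1]; exact ne4)]
  · by_cases h2 : (x : ZMod n) = i + 1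
    · have k1 : ((x - 1 : ℤ) : ZMod n) = i := by rw [castm, h2]; ring
      rw [sFun_ne (i := j) (x := x) (by rw [h2]; exact ne2) (by rw [h2]; exact ne4),
        sFun_eq2 e1 h2,
        sFun_ne (i := j) (x := x - 1) (by rw [k1]; exact ne1) (by rw [k1]; exact ne3)]
    · by_cases h3 : (x : ZMod n) = j
      · have k1 : ((x + 1 : ℤ) : ZMod n) = j + 1 := by rw [castp, h3]
        rw [sFun_eq1 h3,
          sFun_ne (i := i) (x := x + 1) (by rw [k1]; exact fun h => ne3 h.symm)
            (by rw [k1]; exact fun h => ne4 h.symm),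
          sFun_ne (i := i) (x := x) h1 h2, sFun_eq1 h3]
      · by_cases h4 : (x : ZMod n) = j + 1
        · have k1 : ((x - 1 : ℤ) : ZMod n) = j := by rw [castm, h4]; ring
          rw [sFun_eq2 e1 h4,
            sFun_ne (i := i) (x := x - 1) (by rw [k1]; exact fun h => ne1 h.symm)
              (by rw [k1]; exact fun h => ne2 h.symm),
            sFun_ne (i := i) (x := x) h1 h2, sFun_eq2 e1 h4]
        · rw [sFun_ne (i := j) (x := x) h3 h4, sFun_ne (i := i) (x := x) h1 h2,
            sFun_ne (i := j) (x := x) h3 h4]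

lemma perm_shift (hn : 2 ≤ n) (i : ZMod n) :
    sh * sPerm hn i * sh⁻¹ = sPerm hn (i+1) := by
  have e1 : (1 : ZMod n) ≠ 0 := one_ne_zero' hn
  ext x
  simp only [Equiv.Perm.mul_apply, sPerm_apply, sh_apply, sh_inv_apply]
  by_cases h1 : (x : ZMod n) = i + 1
  · have k1 : ((x - 1 : ℤ) : ZMod n) = i := by rw [castm, h1]; ring
    rw [sFun_eq1 k1, sFun_eq1 h1]
    ring
  · by_cases h2 : (x : ZMod n) = i + 1 + 1
    · have k1 : ((x - 1 : ℤ) : ZMod n) = i + 1 := by rw [castm, h2]; ring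
      rw [sFun_eq2 e1 k1, sFun_eq2 e1 (i := i+1) h2]
      ring
    · have k1 : ((x - 1 : ℤ) : ZMod n) ≠ i := by
        rw [castm]; intro h; exact h1 (by linear_combination h)
      have k2 : ((x - 1 : ℤ) : ZMod n) ≠ i + 1 := by
        rw [castm]; intro h; exact h2 (by linear_combination h)
      rw [sFun_ne k1 k2, sFun_ne (i := i+1) h1 h2]
      ring

/-- translation by `n*e` on residue class `j` -/
def TFun (n : ℕ) (j : ZMod n) (e : ℤ) : ℤ → ℤ := fun x =>
  if (x : ZMod n) = j then x + n * e else x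

lemma castZ_muln (x c : ℤ) : ((x + n * c : ℤ) : ZMod n) = (x : ZMod n) := by
  push_cast [ZMod.natCast_self]
  ring

lemma TFun_comp (j : ZMod n) (e1 e2 : ℤ) (x : ℤ) :
    TFun n j e1 (TFun n j e2 x) = TFun n j (e1 + e2) x := by
  unfold TFun
  by_cases h : (x : ZMod n) = j
  · rw [if_pos h, if_pos (by rw [castZ_muln]; exact h), if_pos h]
    ring
  · rw [if_neg h, if_neg h, if_neg h]

def TPerm (n : ℕ) (j : ZMod n) (e : ℤ) : Equiv.Perm ℤ where
  toFun := TFun n j e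
  invFun := TFun n j (-e)
  left_inv := fun x => by rw [TFun_comp]; simp [TFun]
  right_inv := fun x => by rw [TFun_comp]; simp [TFun]

@[simp] lemma TPerm_apply (j : ZMod n) (e x : ℤ) : TPerm n j e x = TFun n j e x := rfl

lemma TPerm_mul (j : ZMod n) (e1 e2 : ℤ) :
    TPerm n j e1 * TPerm n j e2 = TPerm n j (e1+e2) := by
  ext x
  simp only [Equiv.Perm.mul_apply, TPerm_apply, TFun_comp]

lemma TPerm_zero (j : ZMod n) : TPerm n j 0 = 1 := by
  ext x
  simp [TPerm, TFun]

lemma TPerm_inv (j : ZMod n) (e : ℤ) : (TPerm n j e)⁻¹ = TPerm n j (-e) := by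
  rw [inv_eq_iff_mul_eq_one, TPerm_mul]
  simpa using TPerm_zero j

lemma TPerm_zpow (j : ZMod n) (e : ℤ) : (TPerm n j 1) ^ e = TPerm n j e := by
  induction e using Int.induction_on with
  | zero => rw [zpow_zero, TPerm_zero]
  | succ k ih => rw [zpow_add_one, ih, TPerm_mul]
  | pred k ih =>
    rw [zpow_sub_one, ih, TPerm_inv, TPerm_mul, show (-(k:ℤ) + -1) = -(k:ℤ) - 1 by ring]

/-- the assignment of generators -/
def FGen (hn : 2 ≤ n) : ExtGen n → Equiv.Perm ℤ
  | .f i => sPerm hn i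
  | .om => sh

lemma lift_rels (hn : 2 ≤ n) : ∀ r ∈ extRels n, FreeGroup.lift (FGen hn) r = 1 := by
  intro r hr
  rcases hr with ⟨i, h3, rfl⟩ | ⟨i, j, hj1, hj2, hj3, rfl⟩ | ⟨i, rfl⟩
  · simp only [map_mul, map_inv, FreeGroup.lift_apply_of]
    show sPerm hn i * sPerm hn (i+1) * sPerm hn i *
      (sPerm hn (i+1) * sPerm hn i * sPerm hn (i+1))⁻¹ = 1
    rw [mul_inv_eq_one]
    exact perm_braid h3 i
  · simp only [map_mul, map_inv, FreeGroup.lift_apply_of]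
    show sPerm hn i * sPerm hn j * (sPerm hn j * sPerm hn i)⁻¹ = 1
    rw [mul_inv_eq_one]
    exact perm_comm hn i j hj1 hj2 hj3
  · simp only [map_mul, map_inv, FreeGroup.lift_apply_of]
    show sh * sPerm hn i * sh⁻¹ * (sPerm hn (i+1))⁻¹ = 1
    rw [mul_inv_eq_one]
    exact perm_shift hn i

def phi (hn : 2 ≤ n) : BrExt n →* Equiv.Perm ℤ := PresentedGroup.toGroup (lift_rels hn)

lemma phi_f (hn : 2 ≤ n) (i : ZMod n) : phi hn (fB n i) = sPerm hn i :=
  PresentedGroup.toGroup.of (lift_rels hn)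

lemma phi_om (hn : 2 ≤ n) : phi hn (omB n) = sh :=
  PresentedGroup.toGroup.of (lift_rels hn)

lemma phi_fn (hn : 2 ≤ n) (a : ℕ) : phi hn (f n a) = sPerm hn ((a:ℕ) : ZMod n) :=
  phi_f hn _

open scoped Classical in
lemma phi_dsc_eval (hn : 2 ≤ n) : ∀ m, m ≤ n-1 → ∀ x : ℤ,
    (phi hn (dsc n m m)) x =
      if (x : ZMod n) = ((1:ℕ) : ZMod n) then x + m
      else if ∃ k : ℕ, 2 ≤ k ∧ k ≤ m+1 ∧ (x : ZMod n) = ((k:ℕ) : ZMod n) then x - 1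
      else x := by
  intro m
  induction m with
  | zero =>
    intro _ x
    rw [dsc_zero, map_one]
    by_cases h1 : (x : ZMod n) = ((1:ℕ) : ZMod n)
    · rw [if_pos h1]
      simp
    · rw [if_neg h1, if_neg (by rintro ⟨k, hk1, hk2, _⟩; omega)]
      simp
  | succ m ih =>
    intro hm x
    have hsplit : dsc n (m+1) (m+1) = f n (m+1) * dsc n m m := by
      rw [dsc_succ_front, show m+1-1 = m by omega]
    rw [hsplit, map_mul, Equiv.Perm.mul_apply, ih (by omega) x, phi_fn, sPerm_apply]
    have e1 : (1 : ZMod n) ≠ 0 := one_ne_zero' hn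
    have hcast2 : ((m+1:ℕ) : ZMod n) + 1 = ((m+2:ℕ) : ZMod n) := by push_cast; ring
    by_cases h1 : (x : ZMod n) = ((1:ℕ) : ZMod n)
    · rw [if_pos h1, if_pos h1]
      have hc : ((x + (m:ℤ) : ℤ) : ZMod n) = ((m+1:ℕ) : ZMod n) := by
        push_cast
        rw [h1]
        push_cast
        ring
      rw [sFun_eq1 hc]
      push_cast
      ring
    · rw [if_neg h1, if_neg h1]
      by_cases h2 : ∃ k : ℕ, 2 ≤ k ∧ k ≤ m+2 ∧ (x : ZMod n) = ((k:ℕ) : ZMod n)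
      · rw [if_pos h2]
        obtain ⟨k, hk2, hkm, hkc⟩ := h2
        rcases Nat.lt_or_ge k (m+2) with hklt | hkge
        · -- k ≤ m+1 : inner moved down
          rw [if_pos ⟨k, hk2, by omega, hkc⟩]
          have hc : ((x - 1 : ℤ) : ZMod n) = ((k-1:ℕ) : ZMod n) := by
            rw [castm, hkc]
            have : ((k:ℕ) : ZMod n) = ((k-1:ℕ) : ZMod n) + 1 := by
              rw [show k = (k-1)+1 by omega]
              push_cast
              ring
            rw [this]
            ring
          rw [sFun_ne (by rw [hc]; exact cast_ne_nat (by omega) (by omega) (by omega))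
            (by rw [hc, hcast2]; exact cast_ne_nat (by omega) (by omega) (by omega))]
        · -- k = m+2 : new top letter moves it down
          have hk : k = m+2 := by omega
          subst hk
          rw [if_neg (by
            rintro ⟨k', hk2', hkm', hkc'⟩
            have := hkc'.symm.trans hkc
            exact cast_ne_nat (n := n) (by omega) (by omega) (by omega) this)]
          rw [sFun_eq2 e1 (by rw [hkc, hcast2])]
      · have hne1 : (x : ZMod n) ≠ ((m+1:ℕ) : ZMod n) := by
          rcases Nat.eq_zero_or_pos m with hm0 | hm0
          · subst hm0; exact h1
          · intro hc; exact h2 ⟨m+1, by omega, by omega, hc⟩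
        have hne2 : (x : ZMod n) ≠ ((m+1:ℕ) : ZMod n) + 1 := by
          rw [hcast2]
          intro hc; exact h2 ⟨m+2, by omega, by omega, hc⟩
        rw [if_neg (show ¬∃ k:ℕ, 2 ≤ k ∧ k ≤ m+1 ∧ (x:ZMod n) = ((k:ℕ):ZMod n) by
            rintro ⟨k,hk2,hkm,hkc⟩; exact h2 ⟨k, hk2, by omega, hkc⟩),
          if_neg h2, sFun_ne hne1 hne2]

open scoped Classical in
lemma exists_class (hn : 2 ≤ n) {x : ℤ} (hx : (x : ZMod n) ≠ ((1:ℕ) : ZMod n)) :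
    ∃ k : ℕ, 2 ≤ k ∧ k ≤ n ∧ (x : ZMod n) = ((k:ℕ) : ZMod n) := by
  haveI : NeZero n := ⟨by omega⟩
  set c : ZMod n := (x : ZMod n) with hc
  have hval : ((c.val : ℕ) : ZMod n) = c := by rw [ZMod.natCast_val, ZMod.cast_id]
  have hlt : c.val < n := ZMod.val_lt c
  rcases Nat.eq_zero_or_pos c.val with h0 | h0
  · refine ⟨n, by omega, le_rfl, ?_⟩
    rw [show ((n:ℕ) : ZMod n) = 0 from ZMod.natCast_self n]
    have := (ZMod.val_eq_zero c).mp h0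
    exact this
  · have hne1 : c.val ≠ 1 := by
      intro h
      apply hx
      rw [← hval, h]
    refine ⟨c.val, by omega, by omega, hval.symm⟩

lemma phi_y1 (hn : 2 ≤ n) : phi hn (yB n 1) = TPerm n ((1:ℕ) : ZMod n) 1 := by
  classical
  rw [yB_eq]
  simp only [show (1:ℕ)-1 = 0 from rfl, asc_zero, inv_one, one_mul, map_mul, phi_om]
  ext x
  rw [Equiv.Perm.mul_apply, phi_dsc_eval hn (n-1) le_rfl x, TPerm_apply]
  unfold TFun
  by_cases h1 : (x : ZMod n) = ((1:ℕ) : ZMod n)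
  · rw [if_pos h1, if_pos h1, sh_apply]
    push_cast [show ((n-1 : ℕ) : ℤ) = (n:ℤ) - 1 by omega]
    ring
  · obtain ⟨k, hk2, hkn, hkc⟩ := exists_class hn h1
    rw [if_neg h1, if_pos ⟨k, hk2, by omega, hkc⟩, if_neg h1, sh_apply]
    ring

lemma TStep (hn : 2 ≤ n) (j : ZMod n) :
    sPerm hn j * TPerm n j 1 * sPerm hn j = TPerm n (j+1) 1 := by
  have e1 : (1 : ZMod n) ≠ 0 := one_ne_zero' hn
  ext x
  simp only [Equiv.Perm.mul_apply, sPerm_apply, TPerm_apply]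
  unfold TFun
  by_cases h1 : (x : ZMod n) = j
  · have k1 : ((x + 1 : ℤ) : ZMod n) = j + 1 := by rw [castp, h1]
    rw [sFun_eq1 h1, if_neg (by rw [k1]; exact fun h => e1 (by linear_combination h)),
      sFun_eq2 e1 k1, if_neg (by rw [h1]; exact fun h => e1 (by linear_combination -h))]
    ring
  · by_cases h2 : (x : ZMod n) = j + 1
    · have k1 : ((x - 1 : ℤ) : ZMod n) = j := by rw [castm, h2]; ring
      rw [sFun_eq2 e1 h2, if_pos k1, if_pos h2,
        sFun_eq1 (by rw [castZ_muln]; exact k1)]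
      push_cast
      ring
    · rw [sFun_ne h1 h2, if_neg h1, sFun_ne h1 h2, if_neg h2]

lemma phi_y (hn : 2 ≤ n) : ∀ i, 1 ≤ i → i ≤ n →
    phi hn (yB n i) = TPerm n ((i:ℕ) : ZMod n) 1 := by
  intro i
  induction i with
  | zero => intro h _; omega
  | succ i ih =>
    intro _ hin
    rcases Nat.eq_zero_or_pos i with h0 | h0
    · subst h0
      exact phi_y1 hn
    · rw [y_rec i h0 (by omega)]
      simp only [map_mul, map_inv]
      rw [phi_fn, ih (by omega) (by omega), sPerm_inv]
      have := TStep hn ((i:ℕ) : ZMod n)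
      rw [show ((i:ℕ) : ZMod n) + 1 = (((i+1:ℕ)) : ZMod n) by push_cast; ring] at this
      exact this

lemma prod_TPerm_eval (x : ℤ) : ∀ L : List (ZMod n × ℤ),
    ((L.map (fun p => TPerm n p.1 p.2)).prod) x
      = x + n * ((L.map (fun p => if (x : ZMod n) = p.1 then p.2 else 0)).sum) := by
  intro L
  induction L with
  | nil => simp
  | cons p L ih =>
    rw [List.map_cons, List.prod_cons, List.map_cons, List.sum_cons, Equiv.Perm.mul_apply, ih,
      TPerm_apply]
    unfold TFun
    rw [castZ_muln]
    by_cases h : (x : ZMod n) = p.1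
    · rw [if_pos h, if_pos h]
      ring
    · rw [if_neg h, if_neg h]
      ring

lemma phi_wB (hn : 2 ≤ n) (lam : Fin n → ℤ) :
    phi hn (wB n lam)
      = (List.ofFn (fun k : Fin n => TPerm n (((k:ℕ)+1 : ℕ) : ZMod n) (lam k))).prod := by
  unfold wB
  rw [map_list_prod]
  congr 1
  rw [List.map_ofFn]
  apply congrArg List.ofFn
  funext k
  simp only [Function.comp_apply]
  rw [map_zpow, phi_y hn ((k:ℕ)+1) (by omega) (by omega), TPerm_zpow]

lemma wB_eval (hn : 2 ≤ n) (lam : Fin n → ℤ) (k : Fin n) :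
    (phi hn (wB n lam)) (((k:ℕ)+1 : ℕ) : ℤ) = (((k:ℕ)+1 : ℕ) : ℤ) + n * lam k := by
  rw [phi_wB hn lam]
  have hofn : (List.ofFn (fun k : Fin n => TPerm n (((k:ℕ)+1 : ℕ) : ZMod n) (lam k)))
      = (List.ofFn (fun k : Fin n => ((((k:ℕ)+1 : ℕ) : ZMod n), lam k))).map
          (fun p => TPerm n p.1 p.2) := by
    rw [List.map_ofFn]
    rfl
  rw [hofn, prod_TPerm_eval]
  congr 1
  rw [List.map_ofFn]
  have hsum : ((List.ofFn ((fun p : ZMod n × ℤ =>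
        if (((((k:ℕ)+1 : ℕ) : ℤ) : ZMod n)) = p.1 then p.2 else 0) ∘
        (fun j : Fin n => ((((j:ℕ)+1 : ℕ) : ZMod n), lam j)))).sum)
      = ∑ j : Fin n, if (((((k:ℕ)+1 : ℕ) : ℤ) : ZMod n)) = ((((j:ℕ)+1 : ℕ) : ZMod n)) then lam j else 0 := by
    rw [List.sum_ofFn]
    exact Finset.sum_congr rfl (fun j _ => rfl)
  rw [hsum]
  have hval : ∀ j : Fin n, j ≠ k →
      (if (((((k:ℕ)+1 : ℕ) : ℤ) : ZMod n)) = ((((j:ℕ)+1 : ℕ) : ZMod n)) then lam j else 0) = 0 := by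
    intro j hj
    apply if_neg
    have hcast : ((((k:ℕ)+1 : ℕ) : ℤ) : ZMod n) = (((k:ℕ)+1 : ℕ) : ZMod n) := by push_cast; ring
    rw [hcast]
    apply cast_ne_nat
    · intro hc
      exact hj (by
        apply Fin.ext
        omega)
    · omega
    · omega
  rw [Finset.sum_eq_single k (fun b _ hb => hval b hb) (fun h => absurd (Finset.mem_univ k) h)]
  rw [if_pos (by push_cast; ring)]

lemma partC (hn : 2 ≤ n) : Function.Injective (wB n) := by
  intro lam mu h
  funext k
  have h2 := congrArg (phi hn) h
  have h3 : (phi hn (wB n lam)) (((k:ℕ)+1 : ℕ) : ℤ) = (phi hn (wB n mu)) (((k:ℕ)+1 : ℕ) : ℤ) := by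
    rw [h2]
  rw [wB_eval hn lam k, wB_eval hn mu k] at h3
  have h4 : (n:ℤ) * lam k = (n:ℤ) * mu k := by linarith
  exact mul_left_cancel₀ (show (n:ℤ) ≠ 0 by exact_mod_cast (by omega : n ≠ 0)) h4

end BrAux

theorem statement_8 (n : ℕ) (hn : 2 ≤ n) :
    -- (a) the elements `y_1, …, y_n` pairwise commute
    (∀ i j : ℕ, 1 ≤ i → i ≤ n → 1 ≤ j → j ≤ n → yB n i * yB n j = yB n j * yB n i) ∧
    -- (b) `y_1 y_2 ⋯ y_n = ω^n`
    ((List.range n).map (fun k => yB n (k + 1))).prod = omB n ^ n ∧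
    -- (c) `λ ↦ w_λ` is injective on `ℤ^n`
    Function.Injective (wB n) := by
  refine ⟨?_, ?_, ?_⟩
  · intro i j hi1 hin hj1 hjn
    exact BrAux.partA hn i j hi1 hin hj1 hjn
  · exact BrAux.partB hn
  · exact BrAux.partC hn
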